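/- Let k ≥ 1, let C = y_1+⋯+y_m be an auxiliary alphabet of independent variables, work in variables x_1,…,x_k, and define F_j(t^r, X_k) = S_j[C+X_k] − t^r·S_j[C+tX_k]. Then for any integers j_1,…,j_k: det( F_{j_i + l}(t^{k−l}, X_k) )_{1≤i,l≤k} = x_1 x_2 ⋯ x_k · det( F_{j_i + l − 1}(t^{k−l+1}, X_k) )_{1≤i,l≤k}. -/

import Mathlib

open MvPolynomial Finset

set_option synthInstance.maxHeartbeats 1000000
set_option maxHeartbeats 1000000

noncomputable section

/-- The base field `ℚ(q,t)`. -/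
abbrev Fqt : Type := FractionRing (MvPolynomial (Fin 2) ℚ)

/-- The element `q` of `ℚ(q,t)`. -/
def qF : Fqt := algebraMap (MvPolynomial (Fin 2) ℚ) Fqt (X 0)

/-- The element `t` of `ℚ(q,t)`. -/
def tF : Fqt := algebraMap (MvPolynomial (Fin 2) ℚ) Fqt (X 1)

lemma qF_ne_zero : qF ≠ 0 := by
  have h : Function.Injective (algebraMap (MvPolynomial (Fin 2) ℚ) Fqt) :=
    IsFractionRing.injective _ _
  intro hq
  exact MvPolynomial.X_ne_zero (R := ℚ) (0 : Fin 2) (h (by rw [map_zero]; exact hq))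

/-- Polynomials in `N` variables `x_1, …, x_N` over `ℚ(q,t)`. -/
abbrev Rg (N : ℕ) := MvPolynomial (Fin N) Fqt

/-- The field of rational functions in `x_1, …, x_N` over `ℚ(q,t)`. -/
abbrev Kg (N : ℕ) := FractionRing (Rg N)

/-- The variable `x_i` (1-based indexing), as an element of `Kg N`. -/
def xv (N i : ℕ) : Kg N :=
  if h : 1 ≤ i ∧ i ≤ N then algebraMap (Rg N) (Kg N) (X ⟨i - 1, by omega⟩) else 0

/-- A scalar from `ℚ(q,t)` viewed inside `Kg N`. -/
def cK (N : ℕ) (c : Fqt) : Kg N := algebraMap (Rg N) (Kg N) (C c)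

/-- The element `q` of `Kg N`. -/
def qK (N : ℕ) : Kg N := cK N qF

/-- The element `t` of `Kg N`. -/
def tK (N : ℕ) : Kg N := cK N tF

/-- The field automorphism of `Kg N` exchanging two variables. -/
def swapK (N : ℕ) (a b : Fin N) : Kg N ≃+* Kg N :=
  IsFractionRing.ringEquivOfRingEquiv
    (AlgEquiv.toRingEquiv (renameEquiv Fqt (Equiv.swap a b)))

/-- `swapv N a b` exchanges the variables `x_a` and `x_b` (1-based). -/
def swapv (N a b : ℕ) (f : Kg N) : Kg N :=
  if h : 1 ≤ a ∧ a ≤ N ∧ 1 ≤ b ∧ b ≤ N then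
    swapK N ⟨a - 1, by omega⟩ ⟨b - 1, by omega⟩ f else f

/-- The divided difference `∂_i` (1-based): `∂_i f = (f - σ_i f)/(x_i - x_{i+1})`. -/
def dd (N i : ℕ) (f : Kg N) : Kg N :=
  if 1 ≤ i ∧ i + 1 ≤ N then (f - swapv N i (i + 1) f) / (xv N i - xv N (i + 1)) else 0

/-- The algebra endomorphism of `Rg N` scaling the variable `l` by the scalar `c`. -/
def scaleHom (N : ℕ) (l : Fin N) (c : Fqt) : Rg N →ₐ[Fqt] Rg N :=
  aeval (fun i => if i = l then C c * X i else X i)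

lemma scaleHom_comp (N : ℕ) (l : Fin N) (c : Fqt) (hc : c ≠ 0) :
    (scaleHom N l c).comp (scaleHom N l c⁻¹) = AlgHom.id Fqt (Rg N) := by
  apply algHom_ext
  intro i
  by_cases h : i = l
  · subst h
    simp only [scaleHom, AlgHom.coe_comp, Function.comp_apply, aeval_X, if_pos,
      AlgHom.coe_id, id_eq, map_mul, aeval_C, algebraMap_eq, if_true]
    rw [← mul_assoc, ← C_mul, inv_mul_cancel₀ hc, C_1, one_mul]
  · simp [scaleHom, h]

/-- The algebra automorphism of `Rg N` scaling the variable `l` by a nonzero scalar `c`. -/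
def scaleEquiv (N : ℕ) (l : Fin N) (c : Fqt) (hc : c ≠ 0) : Rg N ≃ₐ[Fqt] Rg N :=
  AlgEquiv.ofAlgHom (scaleHom N l c) (scaleHom N l c⁻¹)
    (scaleHom_comp N l c hc)
    (by simpa [inv_inv] using scaleHom_comp N l c⁻¹ (inv_ne_zero hc))

/-- The field automorphism `Θ_l` of `Kg N`, substituting `x_l ↦ q·x_l`. -/
def thetaK (N : ℕ) (l : Fin N) : Kg N ≃+* Kg N :=
  IsFractionRing.ringEquivOfRingEquiv
    (AlgEquiv.toRingEquiv (scaleEquiv N l qF qF_ne_zero))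

/-- `Θ_l` with 1-based indexing: substitutes `x_l ↦ q x_l`. -/
def thetav (N l : ℕ) (f : Kg N) : Kg N :=
  if h : 1 ≤ l ∧ l ≤ N then thetaK N ⟨l - 1, by omega⟩ f else f

/-- The list (alphabet) `x_a, x_{a+1}, …, x_b`. -/
def XL (N a b : ℕ) : List (Kg N) := (List.range' a (b + 1 - a)).map (xv N)

/-- Scaling an alphabet by a constant. -/
def scaleL {A : Type*} [Mul A] (c : A) (L : List A) : List A := L.map (c * ·)

/-- Complete homogeneous function `h_j` of a (listed) alphabet. -/
def hfun {A : Type*} [CommRing A] : List A → ℕ → A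
  | _, 0 => 1
  | [], _ + 1 => 0
  | a :: l, j + 1 => hfun l (j + 1) + a * hfun (a :: l) j
  termination_by l j => (l.length, j)

/-- Elementary symmetric function `e_j` of a (listed) alphabet. -/
def efun {A : Type*} [CommRing A] : List A → ℕ → A
  | _, 0 => 1
  | [], _ + 1 => 0
  | a :: l, j + 1 => efun l (j + 1) + a * efun l j

/-- `S_j[P − M]`, the complete function of degree `j ∈ ℤ` of the difference of
two alphabets: `S_j[P−M] = Σ_{a+b=j} h_a[P]·(−1)^b e_b[M]`, and `0` for `j < 0`. -/
def SJ {A : Type*} [CommRing A] (P M : List A) (j : ℤ) : A :=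
  if 0 ≤ j then
    ∑ p ∈ Finset.range (j.toNat + 1), hfun P (j.toNat - p) * (-1 : A) ^ p * efun M p
  else 0

/-- `e_m[L]` with integer index (`0` for `m < 0`). -/
def EJ {A : Type*} [CommRing A] (L : List A) (m : ℤ) : A :=
  if 0 ≤ m then efun L m.toNat else 0

/-- The Jacobi–Trudi determinant: the Schur function `S_λ[P−M]` for a partition
given as a vector `lam : Fin n → ℕ`. -/
def schurJT {A : Type*} [CommRing A] (n : ℕ) (lam : Fin n → ℕ) (P M : List A) : A :=
  (Matrix.of fun i j : Fin n => SJ P M ((lam i : ℤ) - (i : ℕ) + (j : ℕ))).det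

/-- Skew Schur function `S_{α/η}[P−M]` for integer vectors `α, η` of length `k`. -/
def schurVec {A : Type*} [CommRing A] (k : ℕ) (α η : Fin k → ℤ) (P M : List A) : A :=
  (Matrix.of fun i j : Fin k => SJ P M (α i - (i : ℕ) + (j : ℕ) - η j)).det

/-- Power sum `p_i = x_1^i + ⋯ + x_N^i`. -/
def pK (N i : ℕ) : Kg N := ∑ l ∈ Finset.Icc 1 N, xv N l ^ i

/-- The modified complete functions `g_j = S_j[X(t−1)/(q−1)]`, defined through the
recurrence `j·g_j = Σ_{i=1}^{j} ((t^i−1)/(q^i−1)) p_i g_{j−i}`, `g_0 = 1`. -/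
def gK (N : ℕ) : ℕ → Kg N
  | 0 => 1
  | j + 1 =>
    ((j : Kg N) + 1)⁻¹ *
      ∑ i ∈ (Finset.Icc 1 (j + 1)).attach,
        ((tK N ^ (i : ℕ) - 1) / (qK N ^ (i : ℕ) - 1)) * pK N (i : ℕ) * gK N (j + 1 - (i : ℕ))
  termination_by j => j
  decreasing_by
    have := Finset.mem_Icc.mp i.2
    omega

/-- `g_m` with integer index (`0` for `m < 0`). -/
def gz (N : ℕ) (m : ℤ) : Kg N := if 0 ≤ m then gK N m.toNat else 0

/-- The modified Schur function `S_λ[X^{tq}]` as a `k×k` Jacobi–Trudi determinant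
in the `g_j`'s, for a partition `lam` with at most `k` parts. -/
def schurG (N k : ℕ) (lam : Fin k → ℕ) : Kg N :=
  (Matrix.of fun i j : Fin k => gz N ((lam i : ℤ) - (i : ℕ) + (j : ℕ))).det

/-- `∂_b ∘ ⋯ ∘ ∂_{a+1} ∘ ∂_a` (i.e. `∂_a` applied first). -/
def ddUp (N a b : ℕ) (f : Kg N) : Kg N :=
  (List.range' a (b + 1 - a)).foldl (fun g i => dd N i g) f

/-- `∂_a ∘ ∂_{a+1} ∘ ⋯ ∘ ∂_b` (i.e. `∂_b` applied first). -/
def ddDown (N a b : ℕ) (f : Kg N) : Kg N :=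
  (List.range' a (b + 1 - a)).reverse.foldl (fun g i => dd N i g) f

/-- `∂_{(k|n−k)} = (∂_{n−k}⋯∂_1)(∂_{n−k+1}⋯∂_2)⋯(∂_{n−1}⋯∂_k)`. -/
def ddSyl (N n k : ℕ) (f : Kg N) : Kg N :=
  (List.range k).foldl (fun g j => ddUp N (k - j) (n - 1 - j) g) f

/-- `∂_{ω(k)} = (∂_{k−1})(∂_{k−2}∂_{k−1})⋯(∂_1⋯∂_{k−1})`, the divided difference
of the longest permutation of `S_k`. -/
def ddOmega (N k : ℕ) (f : Kg N) : Kg N :=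
  (List.range (k - 1)).foldl (fun g j => ddDown N (j + 1) (k - 1) g) f

/-- The resultant `R(P,Q) = Π_{a∈P, b∈Q} (a−b)` of two (listed) alphabets. -/
def resL {A : Type*} [CommRing A] (P Q : List A) : A :=
  (P.map (fun a => (Q.map (fun b => a - b)).prod)).prod

/-- `χ^{(k)}_{(1|n−k)} f = ∂_{n−1}⋯∂_k ( R(x_k, X_k^c/t) · f )`. -/
def chi1 (N n k : ℕ) (f : Kg N) : Kg N :=
  ddUp N k (n - 1) (resL [xv N k] (scaleL (tK N)⁻¹ (XL N (k + 1) n)) * f)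

/-- `χ_{(k|n−k)} f = ∂_{(k|n−k)} ( R(X_k, X_k^c/t) · f )`. -/
def chiSyl (N n k : ℕ) (f : Kg N) : Kg N :=
  ddSyl N n k (resL (XL N 1 k) (scaleL (tK N)⁻¹ (XL N (k + 1) n)) * f)

/-- `χ_{ω(k)} f = ∂_{ω(k)} ( Π_{1≤i<j≤k} (x_i − x_j/t) · f )`. -/
def chiOmega (N k : ℕ) (f : Kg N) : Kg N :=
  ddOmega N k
    ((∏ i ∈ Finset.Icc 1 k, ∏ j ∈ Finset.Ioc i k, (xv N i - (tK N)⁻¹ * xv N j)) * f)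

/-- `Θ_{i_k}⋯Θ_{i_1}` for a set `I = {i_1 < ⋯ < i_k}` (smallest index applied first). -/
def thetaSet (N : ℕ) (I : Finset ℕ) (f : Kg N) : Kg N :=
  (I.sort (· ≤ ·)).foldl (fun g l => thetav N l g) f

/-- The Macdonald operator `M_l` in the variables `{x_i : i ∈ I}`:
`M_l^{(I)} = t^{l(l−1)/2} Σ_{J⊆I, |J|=l} R(tX_J, X_I∖X_J) Θ_J`. -/
def MacOp (N : ℕ) (I : Finset ℕ) (l : ℕ) (f : Kg N) : Kg N :=
  tK N ^ (l * (l - 1) / 2) *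
    ∑ J ∈ I.powersetCard l,
      (∏ a ∈ J, ∏ b ∈ I \ J, (tK N * xv N a - xv N b)) * thetaSet N J f

/-- The creation operator
`B_k^{(n)} = Σ_{|I|=k} Σ_{l=0}^{k} (−t)^l x^I (R(X_I,X_I^c/t)/R(X_I,X_I^c)) M_l^{(I)}`. -/
def BOp (N n k : ℕ) (f : Kg N) : Kg N :=
  ∑ I ∈ (Finset.Icc 1 n).powersetCard k, ∑ l ∈ Finset.range (k + 1),
    (-(tK N)) ^ l * (∏ i ∈ I, xv N i) *
      ((∏ a ∈ I, ∏ b ∈ Finset.Icc 1 n \ I, (xv N a - (tK N)⁻¹ * xv N b)) /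
        (∏ a ∈ I, ∏ b ∈ Finset.Icc 1 n \ I, (xv N a - xv N b))) *
      MacOp N I l f

/-- `ε(μ,α)`: the sign of the unique permutation `σ` with
`α_i = μ_{σ(i)} − σ(i) + i` for all `i`, and `0` if no such `σ` exists. -/
def eps (n : ℕ) (μ α : Fin n → ℕ) : ℤ :=
  if h : ∃ σ : Equiv.Perm (Fin n),
      ∀ i, (α i : ℤ) = (μ (σ i) : ℤ) - ((σ i : ℕ) : ℤ) + (i : ℕ) then
    Equiv.Perm.sign h.choose
  else 0

/-- `[|α|] = q^{α_1} t^{n−1} + q^{α_2} t^{n−2} + ⋯ + q^{α_n}`. -/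
def anorm (N n : ℕ) (α : Fin n → ℕ) : Kg N :=
  ∑ i : Fin n, qK N ^ (α i) * tK N ^ (n - 1 - (i : ℕ))

/-- `[|α|]_{t,q}`, i.e. `anorm` with `q` and `t` interchanged. -/
def anormT (N n : ℕ) (α : Fin n → ℕ) : Kg N :=
  ∑ i : Fin n, tK N ^ (α i) * qK N ^ (n - 1 - (i : ℕ))

/-- The finite set of all distinct rearrangements of a vector `ν ∈ ℕ^n`. -/
def permsOf (n : ℕ) (ν : Fin n → ℕ) : Finset (Fin n → ℕ) :=
  Finset.image (fun σ : Equiv.Perm (Fin n) => ν ∘ σ) Finset.univ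

/-- `[λ]_{μν}(q,t) = Σ_α ε(μ,α)·([|λ|] − [|α|])`, `α` ranging over distinct
rearrangements of `ν`. -/
def brackQT (N n : ℕ) (lam μ ν : Fin n → ℕ) : Kg N :=
  ∑ α ∈ permsOf n ν, (eps n μ α : Kg N) * (anorm N n lam - anorm N n α)

/-- `[λ]_{μν}(t,q)`: the same with `q` and `t` interchanged. -/
def brackTQ (N n : ℕ) (lam μ ν : Fin n → ℕ) : Kg N :=
  ∑ α ∈ permsOf n ν, (eps n μ α : Kg N) * (anormT N n lam - anormT N n α)

/-- The conjugate of a partition, as a vector of prescribed length `b`. -/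
def conjTo (a b : ℕ) (lam : Fin a → ℕ) : Fin b → ℕ :=
  fun j => (Finset.univ.filter (fun i : Fin a => (j : ℕ) + 1 ≤ lam i)).card

/-- Dominance order: `dominatedBy n a b` means `a ≤ b`, i.e.
`a_1 + ⋯ + a_i ≤ b_1 + ⋯ + b_i` for all `i`. -/
def dominatedBy (n : ℕ) (a b : Fin n → ℕ) : Prop :=
  ∀ p : Fin n, ∑ i ∈ Finset.Iic p, a i ≤ ∑ i ∈ Finset.Iic p, b i

/-- The Schur polynomial `S_μ[X_n]` inside `Kg N` (Jacobi–Trudi determinant in the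
complete functions of `x_1, …, x_n`). -/
def schurX (N n : ℕ) (μ : Fin n → ℕ) : Kg N := schurJT n μ (XL N 1 n) []

/-- The monomial symmetric polynomial `m_μ[X_n]` inside `Kg N`. -/
def msym (N n : ℕ) (μ : Fin n → ℕ) : Kg N :=
  ∑ α ∈ permsOf n μ, ∏ i : Fin n, xv N ((i : ℕ) + 1) ^ α i

/-- `t`-factorial `k_t! = t^{−k(k−1)/2} (t)_k/(1−t)^k`. -/
def ktfact (N k : ℕ) : Kg N :=
  tK N ^ (-((k * (k - 1) / 2 : ℕ) : ℤ)) *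
    (∏ i ∈ Finset.Icc 1 k, (1 - tK N ^ i)) / (1 - tK N) ^ k

/-- `Ω_k = σ_1 σ_2 ⋯ σ_{k−1} Θ_k`. -/
def omegaOp (N k : ℕ) (f : Kg N) : Kg N :=
  (List.range (k - 1)).foldl (fun g j => swapv N (k - 1 - j) (k - j) g) (thetav N k f)

/-- `(1−tΩ_k)(1−t²Ω_k)⋯(1−t^kΩ_k)`, composed in the order written
(the factor `(1−t^kΩ_k)` applied first). -/
def creationProd (N k : ℕ) (f : Kg N) : Kg N :=
  (List.range k).foldl (fun g j => g - tK N ^ (k - j) * omegaOp N k g) f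

/-- The exponent vector `(0,…,0,α_1,…,α_n) ∈ ℕ^{2n}` read at (1-based) position `i`. -/
def abar (n : ℕ) (α : Fin n → ℕ) (i : ℕ) : ℕ :=
  if h : n + 1 ≤ i ∧ i ≤ 2 * n then α ⟨i - n - 1, by omega⟩ else 0

/-- `x̄^{ρ−(0,…,0,α_1,…,α_n)} = Π_{i=1}^{2n} (−x_i)^{(i−1) − (0,…,0,α)_i}`. -/
def xbar (n : ℕ) (α : Fin n → ℕ) : Kg (2 * n) :=
  ∏ i ∈ Finset.Icc 1 (2 * n), (-(xv (2 * n) i)) ^ (i - 1 - abar n α i)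

/-- `⟨f⟩_{κν} = Σ_α ∂_ω( x̄^{ρ−(0,…,0,α)} f )·([|κ|]_{t,q} − [|α|]_{t,q})`,
`α` over distinct rearrangements of `ν`. -/
def brackF (n : ℕ) (f : Kg (2 * n)) (κ ν : Fin n → ℕ) : Kg (2 * n) :=
  ∑ α ∈ permsOf n ν,
    ddOmega (2 * n) (2 * n) (xbar n α * f) * (anormT (2 * n) n κ - anormT (2 * n) n α)

/-- The creation operator in `k` variables, `B_k^{(k)} = Σ_{l=0}^k (−t)^l x_1⋯x_k M_l^{(k)}`. -/
def BOpSelf (N k : ℕ) (f : Kg N) : Kg N :=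
  ∑ l ∈ Finset.range (k + 1),
    (-(tK N)) ^ l * (∏ i ∈ Finset.Icc 1 k, xv N i) * MacOp N (Finset.Icc 1 k) l f


section AuxLemmas

variable {A : Type*} [CommRing A]

@[simp] lemma hfun_zero (L : List A) : hfun L 0 = 1 := by cases L <;> simp [hfun]
@[simp] lemma hfun_nil_succ (n : ℕ) : hfun ([] : List A) (n+1) = 0 := by simp [hfun]
lemma hfun_cons (a : A) (L : List A) (n : ℕ) :
    hfun (a :: L) (n+1) = hfun L (n+1) + a * hfun (a :: L) n := by
  rw [hfun]

@[simp] lemma efun_zero (L : List A) : efun L 0 = 1 := by cases L <;> simp [efun]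
@[simp] lemma efun_nil_succ (n : ℕ) : efun ([] : List A) (n+1) = 0 := by simp [efun]
lemma efun_cons (a : A) (L : List A) (n : ℕ) :
    efun (a :: L) (n+1) = efun L (n+1) + a * efun L n := by
  rw [efun]

def EJ' {A : Type*} [CommRing A] (L : List A) (m : ℤ) : A :=
  if 0 ≤ m then efun L m.toNat else 0

def Hz {A : Type*} [CommRing A] (L : List A) (j : ℤ) : A :=
  if 0 ≤ j then hfun L j.toNat else 0

@[simp] lemma Hz_neg (L : List A) (j : ℤ) (h : j < 0) : Hz L j = 0 := by
  simp [Hz, not_le.2 h]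

@[simp] lemma Hz_zero (L : List A) : Hz L 0 = 1 := by simp [Hz]

lemma Hz_natCast (L : List A) (n : ℕ) : Hz L (n : ℤ) = hfun L n := by
  simp [Hz]

lemma Hz_cons (a : A) (L : List A) (j : ℤ) :
    Hz (a :: L) j = Hz L j + a * Hz (a :: L) (j - 1) := by
  rcases lt_trichotomy j 0 with h | h | h
  · rw [Hz_neg _ _ h, Hz_neg _ _ h, Hz_neg _ _ (by omega), mul_zero, add_zero]
  · subst h; simp
  · obtain ⟨n, rfl⟩ : ∃ n : ℕ, j = (n : ℤ) + 1 := ⟨(j - 1).toNat, by omega⟩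
    have h1 : ((n : ℤ) + 1) = ((n + 1 : ℕ) : ℤ) := by push_cast; ring
    have h2 : ((n : ℤ) + 1 - 1) = (n : ℤ) := by ring
    rw [h2, h1, Hz_natCast, Hz_natCast, Hz_natCast, hfun_cons]

lemma EJ'_natCast (L : List A) (n : ℕ) : EJ' L (n : ℤ) = efun L n := by simp [EJ']

@[simp] lemma EJ'_neg (L : List A) (m : ℤ) (h : m < 0) : EJ' L m = 0 := by
  simp [EJ', not_le.2 h]

lemma EJ'_cons (a : A) (L : List A) (m : ℤ) :
    EJ' (a :: L) m = EJ' L m + a * EJ' L (m - 1) := by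
  rcases lt_trichotomy m 0 with h | h | h
  · rw [EJ'_neg _ _ h, EJ'_neg _ _ h, EJ'_neg _ _ (by omega), mul_zero, add_zero]
  · subst h; simp [EJ']
  · obtain ⟨n, rfl⟩ : ∃ n : ℕ, m = (n : ℤ) + 1 := ⟨(m - 1).toNat, by omega⟩
    have h1 : ((n : ℤ) + 1) = ((n + 1 : ℕ) : ℤ) := by push_cast; ring
    have h2 : ((n : ℤ) + 1 - 1) = (n : ℤ) := by ring
    rw [h2, h1, EJ'_natCast, EJ'_natCast, EJ'_natCast, efun_cons]

lemma EJ'_concat (a : A) (L : List A) : ∀ m : ℤ,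
    EJ' (L ++ [a]) m = EJ' L m + a * EJ' L (m - 1) := by
  induction L with
  | nil => intro m; simpa using EJ'_cons a [] m
  | cons b L ih =>
    intro m
    have h1 : EJ' ((b :: L) ++ [a]) m = EJ' (L ++ [a]) m + b * EJ' (L ++ [a]) (m - 1) :=
      EJ'_cons b (L ++ [a]) m
    rw [h1, ih m, ih (m - 1), EJ'_cons b L m, EJ'_cons b L (m - 1)]
    ring_nf

lemma Hz_concat_aux (a : A) : ∀ (n : ℕ) (L : List A) (j : ℤ), j ≤ n →
    Hz (L ++ [a]) j = Hz L j + a * Hz (L ++ [a]) (j - 1) := by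
  intro n
  induction n using Nat.strong_induction_on with
  | _ n IHn =>
  intro L
  induction L with
  | nil => intro j _; simpa using Hz_cons a [] j
  | cons b L ihL =>
    intro j hj
    rcases lt_trichotomy j 0 with h0 | h0 | h0
    · rw [Hz_neg _ _ h0, Hz_neg _ _ h0, Hz_neg _ _ (by omega), mul_zero, add_zero]
    · subst h0
      rw [Hz_zero, Hz_zero, Hz_neg _ _ (by omega), mul_zero, add_zero]
    · have hn : 1 ≤ n := by omega
      have G1 := IHn (n - 1) (by omega) (b :: L) (j - 1) (by omega)
      have IH_L := ihL j hj
      have h1 := Hz_cons b (L ++ [a]) j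
      have h2 := Hz_cons b (L ++ [a]) (j - 1)
      have hbl := Hz_cons b L j
      have hgoal : Hz ((b :: L) ++ [a]) j = Hz (b :: (L ++ [a])) j := by
        rw [List.cons_append]
      rw [List.cons_append] at G1 ⊢
      linear_combination h1 - hbl + IH_L - a * h2 + b * G1

lemma Hz_concat (a : A) (L : List A) (j : ℤ) :
    Hz (L ++ [a]) j = Hz L j + a * Hz (L ++ [a]) (j - 1) := by
  rcases le_or_gt j 0 with h | h
  · exact Hz_concat_aux a 0 L j h
  · exact Hz_concat_aux a j.toNat L j (by omega)

lemma efun_of_length_lt : ∀ (L : List A) (n : ℕ), L.length < n → efun L n = 0 := by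
  intro L
  induction L with
  | nil => intro n hn; obtain ⟨n, rfl⟩ : ∃ m, n = m + 1 := ⟨n - 1, by omega⟩; simp
  | cons b L ih =>
    intro n hn
    obtain ⟨n, rfl⟩ : ∃ m, n = m + 1 := ⟨n - 1, by simp at hn; omega⟩
    simp only [List.length_cons] at hn
    rw [efun_cons, ih _ (by omega), ih _ (by omega), mul_zero, add_zero]

lemma efun_length_eq_prod : ∀ L : List A, efun L L.length = L.prod := by
  intro L
  induction L with
  | nil => simp
  | cons b L ih =>
    simp only [List.length_cons, List.prod_cons]
    rw [efun_cons, ih, efun_of_length_lt L _ (by omega), zero_add]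

lemma efun_map_mul (c : A) : ∀ (L : List A) (n : ℕ),
    efun (L.map (fun x => c * x)) n = c ^ n * efun L n := by
  intro L
  induction L with
  | nil => intro n; cases n <;> simp
  | cons b L ih =>
    intro n
    cases n with
    | zero => simp
    | succ n =>
      simp only [List.map_cons]
      rw [efun_cons, efun_cons, ih, ih]
      ring

/-- The cancellation identity `∑_r (-1)^r e_r[X] h_{j-r}[C+X] = h_j[C]`. -/
lemma hz_cancel : ∀ (X C : List A) (j : ℤ),
    ∑ r ∈ Finset.range (X.length + 1),
      (-1 : A) ^ r * EJ' X (r : ℤ) * Hz (C ++ X) (j - r) = Hz C j := by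
  intro X
  induction X using List.reverseRecOn with
  | nil => intro C j; simp [EJ'_natCast]
  | append_singleton X' a ih =>
    intro C j
    have hlen : (X' ++ [a]).length = X'.length + 1 := by simp
    rw [hlen]
    have hsplit : ∀ r ∈ Finset.range (X'.length + 1 + 1),
        (-1 : A) ^ r * EJ' (X' ++ [a]) (r : ℤ) * Hz (C ++ (X' ++ [a])) (j - r)
        = (-1 : A) ^ r * EJ' X' (r : ℤ) * Hz (C ++ (X' ++ [a])) (j - r)
          + a * ((-1 : A) ^ r * EJ' X' ((r : ℤ) - 1) * Hz (C ++ (X' ++ [a])) (j - r)) := by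
      intro r _
      rw [EJ'_concat]
      ring
    rw [Finset.sum_congr rfl hsplit, Finset.sum_add_distrib]
    have hA : ∑ r ∈ Finset.range (X'.length + 1 + 1),
        (-1 : A) ^ r * EJ' X' (r : ℤ) * Hz (C ++ (X' ++ [a])) (j - r)
        = ∑ r ∈ Finset.range (X'.length + 1),
            (-1 : A) ^ r * EJ' X' (r : ℤ) * Hz (C ++ (X' ++ [a])) (j - r) := by
      rw [Finset.sum_range_succ]
      rw [show EJ' X' ((X'.length + 1 : ℕ) : ℤ) = 0 by
        rw [EJ'_natCast]; exact efun_of_length_lt X' _ (by omega)]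
      rw [mul_zero, zero_mul, add_zero]
    have hB : ∑ r ∈ Finset.range (X'.length + 1 + 1),
        a * ((-1 : A) ^ r * EJ' X' ((r : ℤ) - 1) * Hz (C ++ (X' ++ [a])) (j - r))
        = ∑ r ∈ Finset.range (X'.length + 1),
            -(a * ((-1 : A) ^ r * EJ' X' (r : ℤ) * Hz (C ++ (X' ++ [a])) (j - r - 1))) := by
      rw [Finset.sum_range_succ']
      rw [show EJ' X' ((0 : ℕ) - 1 : ℤ) = 0 from EJ'_neg _ _ (by omega)]
      rw [mul_zero, zero_mul, mul_zero, add_zero]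
      refine Finset.sum_congr rfl ?_
      intro r _
      rw [show ((r + 1 : ℕ) : ℤ) - 1 = (r : ℤ) by push_cast; ring,
        show j - ((r + 1 : ℕ) : ℤ) = j - r - 1 by push_cast; ring, pow_succ]
      ring
    rw [hA, hB, ← Finset.sum_add_distrib]
    have hmerge : ∀ r ∈ Finset.range (X'.length + 1),
        (-1 : A) ^ r * EJ' X' (r : ℤ) * Hz (C ++ (X' ++ [a])) (j - r)
          + -(a * ((-1 : A) ^ r * EJ' X' (r : ℤ) * Hz (C ++ (X' ++ [a])) (j - r - 1)))
        = (-1 : A) ^ r * EJ' X' (r : ℤ) * Hz (C ++ X') (j - r) := by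
      intro r _
      have hc : C ++ (X' ++ [a]) = (C ++ X') ++ [a] := (List.append_assoc C X' [a]).symm
      rw [hc, Hz_concat a (C ++ X') (j - r)]
      ring
    rw [Finset.sum_congr rfl hmerge, ih C j]

lemma SJ_nil (P : List A) (j : ℤ) : SJ P ([] : List A) j = Hz P j := by
  unfold SJ Hz
  by_cases h : 0 ≤ j
  · rw [if_pos h, if_pos h]
    rw [Finset.sum_eq_single 0]
    · simp
    · intro p _ hp
      obtain ⟨p, rfl⟩ : ∃ q, p = q + 1 := ⟨p - 1, by omega⟩
      simp
    · intro h0; simp at h0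
  · rw [if_neg h, if_neg h]

/-- Key identity: `∑_r (-1)^r e_r[X] (h_{j-r}[C+X] - t^r h_{j-r}[C+tX]) = 0`. -/
lemma hz_key (X C : List A) (t : A) (j : ℤ) :
    ∑ r ∈ Finset.range (X.length + 1), (-1 : A) ^ r * efun X r *
      (Hz (C ++ X) (j - r) - t ^ r * Hz (C ++ X.map (fun x => t * x)) (j - r)) = 0 := by
  have h1 := hz_cancel X C j
  have h2 := hz_cancel (X.map (fun x => t * x)) C j
  rw [List.length_map] at h2
  have h2' : ∑ r ∈ Finset.range (X.length + 1),
      (-1 : A) ^ r * efun X r * (t ^ r * Hz (C ++ X.map (fun x => t * x)) (j - r)) = Hz C j := by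
    rw [← h2]
    refine Finset.sum_congr rfl ?_
    intro r _
    rw [EJ'_natCast, efun_map_mul]
    ring
  have h1' : ∑ r ∈ Finset.range (X.length + 1),
      (-1 : A) ^ r * efun X r * Hz (C ++ X) (j - r) = Hz C j := by
    rw [← h1]
    refine Finset.sum_congr rfl ?_
    intro r _
    rw [EJ'_natCast]
  calc ∑ r ∈ Finset.range (X.length + 1), (-1 : A) ^ r * efun X r *
      (Hz (C ++ X) (j - r) - t ^ r * Hz (C ++ X.map (fun x => t * x)) (j - r))
      = (∑ r ∈ Finset.range (X.length + 1), (-1 : A) ^ r * efun X r * Hz (C ++ X) (j - r))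
        - ∑ r ∈ Finset.range (X.length + 1), (-1 : A) ^ r * efun X r *
            (t ^ r * Hz (C ++ X.map (fun x => t * x)) (j - r)) := by
        rw [← Finset.sum_sub_distrib]
        refine Finset.sum_congr rfl fun r _ => by ring
    _ = 0 := by rw [h1', h2', sub_self]

lemma det_updateRow_finset_sum {n : Type*} [DecidableEq n] [Fintype n] {R : Type*} [CommRing R]
    (M : Matrix n n R) (j : n) {ι : Type*} [DecidableEq ι] (s : Finset ι) (u : ι → n → R) :
    (M.updateRow j (∑ r ∈ s, u r)).det = ∑ r ∈ s, (M.updateRow j (u r)).det := by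
  induction s using Finset.induction_on with
  | empty =>
    rw [Finset.sum_empty, Finset.sum_empty]
    exact Matrix.det_eq_zero_of_row_eq_zero j (by simp)
  | insert _ _ hns ih =>
    rw [Finset.sum_insert hns, Finset.sum_insert hns, Matrix.det_updateRow_add, ih]

lemma prod_range'_map (f : ℕ → A) : ∀ (n s : ℕ),
    ((List.range' s n).map f).prod = ∏ i ∈ Finset.range n, f (s + i) := by
  intro n
  induction n with
  | zero => intro s; simp
  | succ n ih =>
    intro s
    rw [List.range'_succ, List.map_cons, List.prod_cons, ih (s + 1),
      Finset.prod_range_succ']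
    simp only [add_zero]
    rw [mul_comm]
    congr 1
    · exact Finset.prod_congr rfl fun i _ => congrArg f (by omega)

lemma main_det (K : ℕ) (js : Fin (K+1) → ℤ) (t : A) (X C : List A) (hX : X.length = K + 1) :
    (Matrix.of fun i l : Fin (K+1) =>
      Hz (C ++ X) (js i + (l : ℕ) + 1)
        - t ^ (K - (l : ℕ)) * Hz (C ++ X.map (fun x => t * x)) (js i + (l : ℕ) + 1)).det
    = X.prod *
      (Matrix.of fun i l : Fin (K+1) =>
        Hz (C ++ X) (js i + (l : ℕ))
          - t ^ (K + 1 - (l : ℕ)) * Hz (C ++ X.map (fun x => t * x)) (js i + (l : ℕ))).det := by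
  set P := C ++ X with hP
  set Pt := C ++ X.map (fun x => t * x) with hPt
  set u : ℕ → Fin (K+1) → A := fun r i =>
    Hz P (js i + ((K + 1 : ℕ) : ℤ) - (r : ℕ)) - t ^ r * Hz Pt (js i + ((K + 1 : ℕ) : ℤ) - (r : ℕ))
    with hu
  set Lt : Matrix (Fin (K+1)) (Fin (K+1)) A := Matrix.of fun l i : Fin (K+1) =>
    Hz P (js i + (l : ℕ) + 1) - t ^ (K - (l : ℕ)) * Hz Pt (js i + (l : ℕ) + 1) with hLt
  set Rt : Matrix (Fin (K+1)) (Fin (K+1)) A := Matrix.of fun l i : Fin (K+1) =>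
    Hz P (js i + (l : ℕ)) - t ^ (K + 1 - (l : ℕ)) * Hz Pt (js i + (l : ℕ)) with hRt
  have hLtr : (Matrix.of fun i l : Fin (K+1) =>
      Hz P (js i + (l : ℕ) + 1) - t ^ (K - (l : ℕ)) * Hz Pt (js i + (l : ℕ) + 1)) = Lt.transpose := by
    ext i l; simp [hLt, Matrix.transpose_apply]
  have hRtr : (Matrix.of fun i l : Fin (K+1) =>
      Hz P (js i + (l : ℕ)) - t ^ (K + 1 - (l : ℕ)) * Hz Pt (js i + (l : ℕ))) = Rt.transpose := by
    ext i l; simp [hRt, Matrix.transpose_apply]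
  rw [hLtr, hRtr, Matrix.det_transpose, Matrix.det_transpose]
  -- the key linear relation between rows
  have hkey : ∀ i : Fin (K+1), ∑ r ∈ Finset.range (K+2),
      (-1 : A) ^ r * efun X r * u r i = 0 := by
    intro i
    have h := hz_key X C t (js i + ((K + 1 : ℕ) : ℤ))
    rw [hX] at h
    exact h
  have hrow : Lt (Fin.last K) = u 0 := by
    funext i
    simp only [hLt, hu, Matrix.of_apply, Fin.val_last]
    rw [show (js i + ((K + 1 : ℕ) : ℤ) - ((0 : ℕ) : ℤ)) = js i + (K : ℕ) + 1 by push_cast; ring]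
    norm_num
  have hcomb : u 0 = ∑ r ∈ Finset.range (K+1), ((-1 : A) ^ r * efun X (r+1)) • u (r+1) := by
    funext i
    have h := hkey i
    rw [Finset.sum_range_succ'] at h
    simp only [pow_zero, one_mul, efun_zero, Nat.cast_zero] at h
    rw [Finset.sum_apply]
    have h2 : ∑ r ∈ Finset.range (K+1), (((-1 : A) ^ r * efun X (r+1)) • u (r+1)) i
        = ∑ r ∈ Finset.range (K+1), (-1 : A) ^ r * efun X (r+1) * u (r+1) i :=
      Finset.sum_congr rfl fun r _ => by simp [smul_eq_mul]
    have h3 : ∑ r ∈ Finset.range (K+1), (-1 : A) ^ (r+1) * efun X (r+1) * u (r+1) i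
        = -∑ r ∈ Finset.range (K+1), (-1 : A) ^ r * efun X (r+1) * u (r+1) i := by
      rw [← Finset.sum_neg_distrib]
      exact Finset.sum_congr rfl fun r _ => by rw [pow_succ]; ring
    rw [h2]
    linear_combination h - h3
  have hdetstep : Lt.det = ((-1 : A) ^ K * efun X (K+1)) *
      (Lt.updateRow (Fin.last K) (u (K+1))).det := by
    conv_lhs => rw [← Matrix.updateRow_eq_self Lt (Fin.last K), hrow, hcomb]
    rw [det_updateRow_finset_sum]
    rw [Finset.sum_eq_single_of_mem K (Finset.self_mem_range_succ K)]
    · rw [Matrix.det_updateRow_smul]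
    · intro r hr hne
      have hrK : r < K := by
        have := Finset.mem_range.mp hr; omega
      rw [Matrix.det_updateRow_smul]
      have hidx : (⟨K - (r+1), by omega⟩ : Fin (K+1)) ≠ Fin.last K := by
        intro hcon
        have := congrArg Fin.val hcon
        simp [Fin.val_last] at this
        omega
      have hru : u (r+1) = Lt ⟨K - (r+1), by omega⟩ := by
        funext i
        simp only [hu, hLt, Matrix.of_apply]
        have harg : ((K - (r+1) : ℕ) : ℤ) + 1 = ((K + 1 : ℕ) : ℤ) - ((r+1 : ℕ) : ℤ) := by
          omega
        have hexp : K - (K - (r+1)) = r + 1 := by omega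
        have h5 : js i + ((K + 1 : ℕ) : ℤ) - ((r + 1 : ℕ) : ℤ)
            = js i + ((K - (r+1) : ℕ) : ℤ) + 1 := by omega
        rw [hexp, h5]
      rw [hru]
      rw [Matrix.det_zero_of_row_eq hidx.symm]
      · rw [mul_zero]
      · rw [Matrix.updateRow_self, Matrix.updateRow_ne hidx]
  have hM1 : Lt.updateRow (Fin.last K) (u (K+1)) = Rt.submatrix (finRotate (K+1)) id := by
    ext l i
    rcases eq_or_ne l (Fin.last K) with rfl | hl
    · rw [Matrix.updateRow_self, Matrix.submatrix_apply, finRotate_succ_apply, id_eq]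
      have hlast : Fin.last K + 1 = 0 := by
        ext
        simp [Fin.val_add, Fin.val_last]
      rw [hlast]
      simp only [hu, hRt, Matrix.of_apply, Fin.val_zero, Nat.cast_zero]
      rw [show js i + ((K + 1 : ℕ) : ℤ) - ((K + 1 : ℕ) : ℤ) = js i + 0 by ring]
      rw [Nat.sub_zero]
    · rw [Matrix.updateRow_ne hl, Matrix.submatrix_apply, finRotate_succ_apply, id_eq]
      have hlt : l < Fin.last K := lt_of_le_of_ne (Fin.le_last l) hl
      have hval : ((l + 1 : Fin (K+1)) : ℕ) = (l : ℕ) + 1 := Fin.val_add_one_of_lt hlt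
      simp only [hLt, hRt, Matrix.of_apply, hval]
      have harg : (js i + (((l : ℕ) + 1 : ℕ) : ℤ)) = js i + (l : ℕ) + 1 := by push_cast; ring
      have hexp : K + 1 - ((l : ℕ) + 1) = K - (l : ℕ) := by omega
      rw [harg, hexp]
  have hsign : (Rt.submatrix (finRotate (K+1)) id).det = (-1 : A) ^ K * Rt.det := by
    rw [Matrix.det_permute, sign_finRotate]
    push_cast
    ring
  rw [hdetstep, hM1, hsign]
  have hprod : efun X (K+1) = X.prod := by rw [← hX, efun_length_eq_prod]
  rw [hprod]
  have hsq : ((-1 : A) ^ K) ^ 2 = 1 := by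
    rw [← pow_mul, mul_comm, pow_mul]
    norm_num
  calc (-1 : A) ^ K * X.prod * ((-1 : A) ^ K * Rt.det)
      = ((-1 : A) ^ K) ^ 2 * (X.prod * Rt.det) := by ring
    _ = X.prod * Rt.det := by rw [hsq, one_mul]

end AuxLemmas

/-- Lemma 4.5: with
`F_j(t^r,X_k) = S_j[C+X_k] − t^r S_j[C+tX_k]` and `C = x_{k+1},…,x_{k+m}`,
`det(F_{j_i+l}(t^{k−l},X_k)) = x_1⋯x_k · det(F_{j_i+l−1}(t^{k−l+1},X_k))`. -/
theorem stmt16 (k m : ℕ) (hk1 : 1 ≤ k) (js : Fin k → ℤ) :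
    (Matrix.of fun i l : Fin k =>
        SJ (XL (k + m) (k + 1) (k + m) ++ XL (k + m) 1 k) [] (js i + (l : ℕ) + 1)
          - tK (k + m) ^ (k - 1 - (l : ℕ)) *
            SJ (XL (k + m) (k + 1) (k + m) ++
                scaleL (tK (k + m)) (XL (k + m) 1 k)) [] (js i + (l : ℕ) + 1)).det
      = (∏ i ∈ Finset.Icc 1 k, xv (k + m) i) *
          (Matrix.of fun i l : Fin k =>
            SJ (XL (k + m) (k + 1) (k + m) ++ XL (k + m) 1 k) [] (js i + (l : ℕ))
              - tK (k + m) ^ (k - (l : ℕ)) *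
                SJ (XL (k + m) (k + 1) (k + m) ++
                    scaleL (tK (k + m)) (XL (k + m) 1 k)) [] (js i + (l : ℕ))).det := by
  obtain ⟨K, rfl⟩ : ∃ K, k = K + 1 := ⟨k - 1, by omega⟩
  have hlen : (XL (K + 1 + m) 1 (K + 1)).length = K + 1 := by
    simp [XL]
  have h1 := main_det K js (tK (K + 1 + m)) (XL (K + 1 + m) 1 (K + 1))
    (XL (K + 1 + m) (K + 1 + 1) (K + 1 + m)) hlen
  have hp : (XL (K + 1 + m) 1 (K + 1)).prod = ∏ i ∈ Finset.Icc 1 (K + 1), xv (K + 1 + m) i := by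
    rw [XL, show K + 1 + 1 - 1 = K + 1 by omega, prod_range'_map,
      show Finset.Icc 1 (K + 1) = Finset.Ico 1 (K + 1 + 1) from (by ext x; simp only [Finset.mem_Icc, Finset.mem_Ico]; omega),
      Finset.prod_Ico_eq_prod_range, show K + 1 + 1 - 1 = K + 1 by omega]
  rw [hp] at h1
  simp only [SJ_nil, scaleL, Nat.add_sub_cancel]
  exact h1


end
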